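/- Fix integers n ≥ 1 and p ≥ 1, and let ω ∈ ℂ be a primitive p-th root of unity. Let F = Σ_{k≥0} (binom(nk, k)/((n−1)k+1)) X^k ∈ ℂ[[X]] be the Fuss–Catalan power series, and let H ∈ ℂ[[X]] be the (unique) formal power series with constant term 1 satisfying X·H′ = H · Σ_{m≥1} binom(nmp, mp) X^m. Then ∏_{k=0}^{p−1} (1 − F(ω^k X)) = −X^p · H(X^p) in ℂ[[X]], where F(ω^k X) denotes the rescaling of F by ω^k and H(X^p) the substitution of X^p into H. (This is the identity e(*binom(np, p)) = (−1/z) ∏_{k=0}^{p−1} (1 − e((1/n)*binom(n,1))(ω^k z^{1/p})).) -/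

import Mathlib

open PowerSeries

namespace FussAux

noncomputable def c (m j : ℕ) : ℂ := (Nat.choose ((m+1) * j) j : ℂ) / ((m : ℂ) * j + 1)

noncomputable def A (m : ℕ) : ℕ → ℕ → ℂ
  | 0, _ => 1
  | (i+1), r => ((r + i * (m+1) + m + 1).choose (i+1) : ℂ)
      - (m+1) * ((r + i * (m+1) + m).choose i : ℂ)

lemma natden_ne (a b : ℕ) : ((a : ℂ) * b + 1) ≠ 0 := by
  have h : ((a * b + 1 : ℕ) : ℂ) ≠ 0 := Nat.cast_ne_zero.mpr (Nat.succ_ne_zero _)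
  push_cast at h
  exact h

lemma cast_succ_ne (a : ℕ) : ((a : ℂ) + 1) ≠ 0 := by
  have h : ((a + 1 : ℕ) : ℂ) ≠ 0 := Nat.cast_ne_zero.mpr (Nat.succ_ne_zero _)
  push_cast at h
  exact h

lemma choose_mul_succ (a b : ℕ) (h : b ≤ a) :
    (a.choose (b+1) : ℂ) * (b+1) = a.choose b * ((a:ℂ) - b) := by
  have h1 := Nat.choose_succ_right_eq a b
  calc (a.choose (b+1) : ℂ) * (b+1) = ((a.choose (b+1) * (b+1) : ℕ) : ℂ) := by push_cast; ring
    _ = ((a.choose b * (a - b) : ℕ) : ℂ) := by rw [h1]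
    _ = a.choose b * ((a:ℂ) - b) := by push_cast [h]; ring

lemma succ_mul_choose (a b : ℕ) :
    ((a+1).choose (b+1) : ℂ) * (b+1) = ((a:ℂ)+1) * a.choose b := by
  have h1 := (Nat.add_one_mul_choose_eq a b).symm
  calc ((a+1).choose (b+1) : ℂ) * (b+1) = (((a+1).choose (b+1) * (b+1) : ℕ) : ℂ) := by
        push_cast; ring
    _ = ((Nat.succ a * a.choose b : ℕ) : ℂ) := by rw [h1]
    _ = ((a:ℂ)+1) * a.choose b := by push_cast; ring

lemma pascal (a b : ℕ) :
    ((a+1).choose (b+1) : ℂ) = a.choose b + a.choose (b+1) := by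
  rw [Nat.choose_succ_succ' a b]; push_cast; ring


lemma A_top (m r : ℕ) : A m 0 r = 1 := rfl

lemma A_zero (m i : ℕ) : A m (i+1) 0 = 0 := by
  simp only [A, Nat.zero_add]
  have h := succ_mul_choose (i * (m+1) + m) i
  have hi : ((i:ℂ)+1) ≠ 0 := cast_succ_ne i
  have he : ((i * (m+1) + m : ℕ) : ℂ) + 1 = ((m:ℂ)+1) * ((i:ℂ)+1) := by
    push_cast; ring
  rw [he] at h
  have h2 : ((i * (m+1) + m + 1).choose (i+1) : ℂ) = ((m:ℂ)+1) * ((i * (m+1) + m).choose i) := by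
    refine mul_right_cancel₀ hi ?_
    rw [h]; ring
  rw [h2]; ring

lemma A_succ (m i r : ℕ) : A m (i+1) (r+1) = A m (i+1) r + A m i (r + (m+1)) := by
  cases i with
  | zero =>
    simp only [A, Nat.zero_mul, Nat.add_zero, Nat.zero_add, Nat.choose_one_right,
      Nat.choose_zero_right]
    push_cast; ring
  | succ i =>
    simp only [A]
    have e0 : r + 1 + (i+1) * (m+1) + m + 1 = (r + (i+1) * (m+1) + m) + 2 := by ring
    have e1 : r + 1 + (i+1) * (m+1) + m = (r + (i+1) * (m+1) + m) + 1 := by ring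
    have e3 : r + (m+1) + i * (m+1) + m + 1 = (r + (i+1) * (m+1) + m) + 1 := by ring
    have e4 : r + (m+1) + i * (m+1) + m = r + (i+1) * (m+1) + m := by ring
    rw [e0, e1, e3, e4]
    set v := r + (i+1) * (m+1) + m with hv
    have p1 := pascal (v+1) (i+1)
    have p2 := pascal v i
    rw [show v + 1 + 1 = v + 2 from rfl] at p1
    rw [p1, p2]
    ring


lemma A_one (m i : ℕ) : A m i 1 = c m i := by
  cases i with
  | zero => simp [A, c]
  | succ i =>
    simp only [A, c]
    have e1 : 1 + i * (m+1) + m + 1 = ((i+1) * (m+1)) + 1 := by ring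
    have e2 : 1 + i * (m+1) + m = (i+1) * (m+1) := by ring
    rw [e1, e2]
    set a := (i+1) * (m+1) with ha
    have hia : i ≤ a := by
      calc i ≤ i + 1 := Nat.le_succ i
        _ ≤ (i+1) * (m+1) := Nat.le_mul_of_pos_right _ (by omega)
    have h1 := succ_mul_choose a i
    have h2 := choose_mul_succ a i hia
    have hai : (a:ℂ) - i = (m:ℂ) * (i+1) + 1 := by
      rw [ha]; push_cast; ring
    have ha1 : (a:ℂ) + 1 = ((m:ℂ)+1) * (i+1) + 1 := by rw [ha]; push_cast; ring
    rw [hai] at h2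
    rw [ha1] at h1
    have hd : ((m:ℂ) * (i+1) + 1) ≠ 0 := by
      have := natden_ne m (i+1); push_cast at this; exact this
    have hi : ((i:ℂ)+1) ≠ 0 := cast_succ_ne i
    have hcc : ((m+1) * (i+1) : ℕ) = a := by rw [ha]; ring
    rw [hcc]
    have hd2 : ((m:ℂ) * ((i:ℕ)+1 : ℕ) + 1) ≠ 0 := by push_cast; exact hd
    rw [eq_div_iff hd2]
    refine mul_right_cancel₀ hi ?_
    push_cast
    linear_combination ((m:ℂ) * (i+1) + 1) * h1 - h2

lemma A_base (m i : ℕ) : A m i (m+1) = c m (i+1) := by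
  cases i with
  | zero =>
    have hm : ((m:ℂ)+1) ≠ 0 := cast_succ_ne m
    simp only [A, c]
    norm_num [Nat.choose_one_right]
    rw [div_self hm]
  | succ i =>
    simp only [A, c]
    have e1 : m + 1 + i * (m+1) + m + 1 = ((i+1) * (m+1) + m) + 1 := by ring
    have e2 : m + 1 + i * (m+1) + m = (i+1) * (m+1) + m := by ring
    rw [e1, e2]
    set w := (i+1) * (m+1) + m with hw
    have hiw : i + 1 ≤ w + 1 := by
      have h := Nat.le_mul_of_pos_right (i+1) (show 0 < m+1 by omega)
      omega
    have h2 := choose_mul_succ (w+1) (i+1) hiw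
    have h1 := succ_mul_choose w i
    push_cast at h1 h2
    have hwi : ((w:ℂ) + 1) - ((i:ℂ) + 1) = (m:ℂ) * (i+2) + 1 := by rw [hw]; push_cast; ring
    have hw1 : (w:ℂ) + 1 = ((m:ℂ)+1) * (i+2) := by rw [hw]; push_cast; ring
    rw [hwi] at h2
    rw [hw1] at h1
    have hd : ((m:ℂ) * ((i:ℂ)+2) + 1) ≠ 0 := by
      have := natden_ne m (i+2); push_cast at this; exact this
    have hi1 : ((i:ℂ)+1) ≠ 0 := cast_succ_ne i
    have hi2 : ((i:ℂ)+2) ≠ 0 := by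
      intro hx
      have := cast_succ_ne (i+1)
      push_cast at this
      exact this (by linear_combination hx)
    have hcc : ((m+1) * (i+1+1) : ℕ) = w + 1 := by rw [hw]; ring
    rw [hcc]
    have hd2 : ((m:ℂ) * ((i+1+1 : ℕ) : ℂ) + 1) ≠ 0 := by push_cast; convert hd using 3; ring
    rw [eq_div_iff hd2]
    refine mul_right_cancel₀ hi2 (mul_right_cancel₀ hi1 ?_)
    push_cast
    linear_combination (((m:ℂ)*((i:ℂ)+2)+1) * ((i:ℂ)+1)) * h1 - ((i:ℂ)+1) * h2

/-- Rothe–Hagen convolution, proved by double induction. -/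
lemma sumM (m : ℕ) : ∀ j r : ℕ,
    (∑ k ∈ Finset.range (j+1), (((m+1) * k).choose k : ℂ) * A m (j-k) r)
      = ((r + j * (m+1)).choose j : ℂ) := by
  intro j
  induction j with
  | zero => intro r; simp [A]
  | succ j ihj =>
    intro r
    induction r with
    | zero =>
      rw [Finset.sum_eq_single_of_mem (j+1) (Finset.self_mem_range_succ (j+1))]
      · simp only [Nat.sub_self, A, mul_one, Nat.zero_add]
        congr 2
        ring
      · intro k hk hne
        have hk' : k ≤ j := by
          have := Finset.mem_range.mp hk; omega
        rw [show j + 1 - k = (j - k) + 1 from by omega, A_zero, mul_zero]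
    | succ r ihr =>
      have split : ∀ k ∈ Finset.range (j+1),
          (((m+1) * k).choose k : ℂ) * A m (j+1-k) (r+1)
            = (((m+1) * k).choose k : ℂ) * A m (j+1-k) r
              + (((m+1) * k).choose k : ℂ) * A m (j-k) (r + (m+1)) := by
        intro k hk
        have hk' : k ≤ j := by have := Finset.mem_range.mp hk; omega
        rw [show j + 1 - k = (j - k) + 1 from by omega, A_succ]
        ring
      have e5 : j + 1 - (j + 1) = 0 := by omega
      rw [Finset.sum_range_succ, Finset.sum_congr rfl split, Finset.sum_add_distrib, e5,
        A_top, mul_one]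
      have hh := ihr
      rw [Finset.sum_range_succ, e5, A_top, mul_one] at hh
      rw [show r + 1 + (j+1) * (m+1) = (r + (j+1) * (m+1)) + 1 from by ring,
        pascal (r + (j+1) * (m+1)) j]
      have hj2 := ihj (r + (m+1))
      rw [show r + (m+1) + j * (m+1) = r + (j+1) * (m+1) from by ring] at hj2
      linear_combination hh + hj2

lemma c_zero (m : ℕ) : c m 0 = 1 := by simp [c]

lemma c_one (m : ℕ) : c m 1 = 1 := by
  have hm : ((m:ℂ)+1) ≠ 0 := cast_succ_ne m
  simp only [c]
  norm_num [Nat.choose_one_right]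
  exact hm

/-- The key coefficient identity: `coeff N (S*U) = N * c (N+1)`. -/
lemma coeffUS (m N : ℕ) :
    (∑ k ∈ Finset.range (N+1),
      (if k = 0 then 0 else (((m+1) * k).choose k : ℂ)) * c m (N - k + 1))
    = (N : ℂ) * c m (N+1) := by
  have G := sumM m (N+1) 1
  simp only [A_one] at G
  rw [Finset.sum_range_succ, show N + 1 - (N+1) = 0 from by omega, c_zero, mul_one] at G
  have hterm : ∀ k ∈ Finset.range (N+1),
      (((m+1) * k).choose k : ℂ) * c m (N+1-k)
        = (if k = 0 then 0 else (((m+1) * k).choose k : ℂ)) * c m (N - k + 1)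
          + (if k = 0 then c m (N+1) else 0) := by
    intro k hk
    have hk' : k ≤ N := by have := Finset.mem_range.mp hk; omega
    by_cases h0 : k = 0
    · subst h0; simp
    · rw [if_neg h0, if_neg h0, show N + 1 - k = N - k + 1 from by omega, add_zero]
  rw [Finset.sum_congr rfl hterm, Finset.sum_add_distrib] at G
  have hone : (∑ k ∈ Finset.range (N+1), if k = 0 then c m (N+1) else 0) = c m (N+1) := by
    rw [Finset.sum_ite_eq' (Finset.range (N+1)) 0 (fun _ => c m (N+1))]
    simp
  rw [hone] at G
  -- G : our + c m (N+1) + choose((m+1)(N+1), N+1) = choose(1+(N+1)(m+1), N+1)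
  set a := (N+1) * (m+1) with ha
  have hNa : N ≤ a := by
    have h := Nat.le_mul_of_pos_right (N+1) (show 0 < m+1 by omega)
    omega
  have h2 := choose_mul_succ a N hNa
  have had : (a:ℂ) - N = (m:ℂ) * (N+1) + 1 := by rw [ha]; push_cast; ring
  rw [had] at h2
  have hpas : ((1 + (N+1) * (m+1)).choose (N+1) : ℂ) = (a.choose N : ℂ) + (a.choose (N+1) : ℂ) := by
    rw [show 1 + (N+1) * (m+1) = a + 1 from by rw [ha]; ring]
    exact pascal a N
  rw [hpas] at G
  have hcc : ((m+1) * (N+1) : ℕ) = a := by rw [ha]; ring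
  rw [hcc] at G
  have hd : ((m:ℂ) * (N+1) + 1) ≠ 0 := by
    have := natden_ne m (N+1); push_cast at this; exact this
  have hcval : c m (N+1) = (a.choose (N+1) : ℂ) / ((m:ℂ) * (N+1) + 1) := by
    simp only [c, hcc]
    norm_num
  rw [eq_div_iff hd] at hcval
  have hcn : (a.choose N : ℂ) = ((N:ℂ)+1) * c m (N+1) := by
    refine mul_right_cancel₀ hd ?_
    linear_combination - h2 - ((N:ℂ)+1) * hcval
  linear_combination G + hcn

noncomputable def U (m : ℕ) : ℂ⟦X⟧ := PowerSeries.mk fun j => c m (j+1)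

noncomputable def S (m : ℕ) : ℂ⟦X⟧ :=
  PowerSeries.mk fun j => if j = 0 then 0 else (((m+1) * j).choose j : ℂ)

lemma coeff_U (m j : ℕ) : coeff j (U m) = c m (j+1) := coeff_mk j _

lemma coeff_S (m j : ℕ) :
    coeff j (S m) = if j = 0 then 0 else (((m+1) * j).choose j : ℂ) := coeff_mk j _

lemma constantCoeff_U (m : ℕ) : constantCoeff (U m) = 1 := by
  rw [← coeff_zero_eq_constantCoeff, coeff_U, c_one]

lemma XdU (m : ℕ) : X * d⁄dX ℂ (U m) = U m * S m := by
  ext N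
  have hr : coeff N (U m * S m)
      = ∑ k ∈ Finset.range (N+1), coeff k (S m) * coeff (N-k) (U m) := by
    rw [mul_comm, coeff_mul, Finset.Nat.sum_antidiagonal_eq_sum_range_succ_mk]
  rw [hr]
  cases N with
  | zero =>
    have hl : coeff 0 (X * d⁄dX ℂ (U m)) = 0 := by
      simp [coeff_zero_eq_constantCoeff, map_mul]
    rw [hl, Finset.sum_range_one, coeff_S]
    norm_num
  | succ N =>
    rw [coeff_succ_X_mul, coeff_derivative]
    have hco := coeffUS m (N+1)
    simp only [coeff_S, coeff_U]
    rw [hco]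
    push_cast
    ring

lemma Xd_rescale (a : ℂ) (f : ℂ⟦X⟧) :
    X * d⁄dX ℂ (PowerSeries.rescale a f) = PowerSeries.rescale a (X * d⁄dX ℂ f) := by
  ext N
  cases N with
  | zero =>
    simp [coeff_zero_eq_constantCoeff, map_mul, coeff_rescale]
  | succ N =>
    rw [coeff_succ_X_mul, coeff_derivative, coeff_rescale, coeff_rescale,
      coeff_succ_X_mul, coeff_derivative]
    ring

lemma prod_ode {ι : Type*} (s : Finset ι) (f g : ι → ℂ⟦X⟧)
    (h : ∀ i ∈ s, X * d⁄dX ℂ (f i) = f i * g i) :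
    X * d⁄dX ℂ (∏ i ∈ s, f i) = (∏ i ∈ s, f i) * (∑ i ∈ s, g i) := by
  induction s using Finset.cons_induction with
  | empty => simp
  | cons a s ha ih =>
    rw [Finset.prod_cons, Finset.sum_cons]
    have hD := Derivation.leibniz (d⁄dX ℂ) (f a) (∏ i ∈ s, f i)
    rw [hD]
    simp only [smul_eq_mul]
    rw [mul_add]
    have hfa := h a (Finset.mem_cons_self a s)
    have hih := ih (fun i hi => h i (Finset.mem_cons_of_mem hi))
    rw [show X * (f a * d⁄dX ℂ (∏ i ∈ s, f i)) + X * ((∏ i ∈ s, f i) * d⁄dX ℂ (f a))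
        = f a * (X * d⁄dX ℂ (∏ i ∈ s, f i)) + (∏ i ∈ s, f i) * (X * d⁄dX ℂ (f a)) from by
      ring, hih, hfa]
    ring

lemma ode_coeff (W T : ℂ⟦X⟧) (h : X * d⁄dX ℂ W = W * T) (N : ℕ) :
    (N : ℂ) * coeff N W = ∑ k ∈ Finset.range (N+1), coeff k W * coeff (N-k) T := by
  have h' := congrArg (coeff N) h
  have hr : coeff N (W * T)
      = ∑ k ∈ Finset.range (N+1), coeff k W * coeff (N-k) T := by
    rw [coeff_mul, Finset.Nat.sum_antidiagonal_eq_sum_range_succ_mk]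
  rw [hr] at h'
  rw [← h']
  cases N with
  | zero =>
    simp [coeff_zero_eq_constantCoeff, map_mul]
  | succ N =>
    rw [coeff_succ_X_mul, coeff_derivative]
    push_cast
    ring

lemma constCoeff_rescale (a : ℂ) (f : ℂ⟦X⟧) :
    constantCoeff (PowerSeries.rescale a f) = constantCoeff f := by
  rw [← coeff_zero_eq_constantCoeff, coeff_rescale, pow_zero, one_mul,
    coeff_zero_eq_constantCoeff]

lemma prod_neg_pow (p : ℕ) (hp : 1 ≤ p) (ω : ℂ) (hω : IsPrimitiveRoot ω p) :
    (∏ k ∈ Finset.range p, (-(ω^k))) = -1 := by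
  have h1 : (∏ k ∈ Finset.range p, (-(ω^k))) = (-1)^p * ω^(∑ k ∈ Finset.range p, k) := by
    rw [Finset.prod_congr rfl (fun k _ => show -(ω^k) = (-1) * ω^k from by ring),
      Finset.prod_mul_distrib, Finset.prod_const, Finset.card_range,
      Finset.prod_pow_eq_pow_sum]
  rw [h1]
  rcases Nat.even_or_odd p with he | ho
  · obtain ⟨t, ht⟩ := he
    have ht1 : 1 ≤ t := by omega
    have hω2 : ω ^ t = -1 := by
      have hx : (ω ^ t) ^ 2 = 1 := by
        rw [← pow_mul, show t * 2 = p from by omega]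
        exact hω.pow_eq_one
      have hne : ω ^ t ≠ 1 := hω.pow_ne_one_of_pos_of_lt (by omega) (by omega)
      have hfac : (ω ^ t - 1) * (ω ^ t + 1) = 0 := by linear_combination hx
      rcases mul_eq_zero.mp hfac with h | h
      · exact absurd (sub_eq_zero.mp h) hne
      · exact eq_neg_of_add_eq_zero_left h
    have hsum : (∑ k ∈ Finset.range p, k) = t * (p - 1) := by
      have h2 := Finset.sum_range_id_mul_two p
      have h3 : p * (p - 1) = (t * (p - 1)) * 2 := by
        rw [ht]; ring
      exact Nat.eq_of_mul_eq_mul_right (by norm_num) (h2.trans h3)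
    rw [hsum, pow_mul, hω2, Even.neg_one_pow ⟨t, ht⟩, Odd.neg_one_pow ⟨t - 1, by omega⟩,
      one_mul]
  · obtain ⟨t, ht⟩ := ho
    have hsum : (∑ k ∈ Finset.range p, k) = p * t := by
      have h2 := Finset.sum_range_id_mul_two p
      have h3 : p * (p - 1) = (p * t) * 2 := by
        rw [show p - 1 = 2 * t from by omega]; ring
      exact Nat.eq_of_mul_eq_mul_right (by norm_num) (h2.trans h3)
    rw [hsum, pow_mul, hω.pow_eq_one, one_pow, Odd.neg_one_pow ⟨t, ht⟩, mul_one]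

lemma root_filter (p : ℕ) (ω : ℂ) (hω : IsPrimitiveRoot ω p) (j : ℕ) :
    (∑ k ∈ Finset.range p, (ω^j)^k) = if p ∣ j then (p:ℂ) else 0 := by
  by_cases hd : p ∣ j
  · rw [if_pos hd, (hω.pow_eq_one_iff_dvd j).mpr hd]
    simp
  · rw [if_neg hd]
    have hne : ω ^ j ≠ 1 := fun h => hd ((hω.pow_eq_one_iff_dvd j).mp h)
    rw [geom_sum_eq hne]
    have hpow : (ω ^ j) ^ p = 1 := by
      rw [← pow_mul, mul_comm, pow_mul, hω.pow_eq_one, one_pow]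
    rw [hpow]
    simp

end FussAux

open FussAux in
/-- The identity
`e(*binom(np,p)) = (−1/z) ∏_{k=0}^{p−1} (1 − e((1/n)*binom(n,1))(ω^k z^{1/p}))`:
if `F` is the Fuss–Catalan series, `H` is the power series with constant term 1
whose logarithmic derivative has coefficients `binom(nmp,mp)`, and `ω` is a
primitive `p`-th root of unity, then
`∏_{k=0}^{p−1} (1 − F(ω^k X)) = −X^p · H(X^p)`. -/
theorem prod_one_sub_rescale_fussCatalan (n p : ℕ) (hn : 1 ≤ n) (hp : 1 ≤ p)
    (ω : ℂ) (hω : IsPrimitiveRoot ω p) (H : ℂ⟦X⟧)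
    (hH0 : constantCoeff H = 1)
    (hH : X * (d⁄dX ℂ H) =
      H * (PowerSeries.mk fun m =>
        if m = 0 then 0 else (Nat.choose (n * m * p) (m * p) : ℂ))) :
    ∏ k ∈ Finset.range p,
        (1 - PowerSeries.rescale (ω ^ k)
          (PowerSeries.mk fun j => (Nat.choose (n * j) j : ℂ) / (((n : ℂ) - 1) * j + 1))) =
      -(X ^ p) *
        PowerSeries.mk (fun k => if p ∣ k then PowerSeries.coeff (k / p) H else 0) := by

  obtain ⟨m, rfl⟩ : ∃ m, n = m + 1 := ⟨n - 1, by omega⟩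
  have hppos : 0 < p := hp
  have hp0 : (p : ℂ) ≠ 0 := Nat.cast_ne_zero.mpr (by omega)
  -- the Fuss–Catalan series equals 1 + X * U m
  have hFU : (PowerSeries.mk fun j =>
        (Nat.choose ((m+1) * j) j : ℂ) / ((((m+1 : ℕ) : ℂ) - 1) * (j:ℂ) + 1))
      = 1 + X * U m := by
    ext k
    cases k with
    | zero =>
      rw [coeff_mk]
      norm_num
    | succ k =>
      rw [coeff_mk, map_add, coeff_one, if_neg (Nat.succ_ne_zero k), coeff_succ_X_mul,
        coeff_U]
      rw [zero_add]
      simp only [c]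
      congr 1
      push_cast
      ring
  set Q := ∏ k ∈ Finset.range p, PowerSeries.rescale (ω^k) (U m) with hQdef
  set Sp := ∑ k ∈ Finset.range p, PowerSeries.rescale (ω^k) (S m) with hSpdef
  have hQode : X * d⁄dX ℂ Q = Q * Sp := by
    rw [hQdef, hSpdef]
    exact prod_ode _ _ _ (fun k _ => by rw [Xd_rescale, XdU, map_mul])
  have hQ0 : constantCoeff Q = 1 := by
    rw [hQdef, map_prod]
    rw [Finset.prod_congr rfl (fun k _ => constCoeff_rescale (ω^k) (U m))]
    rw [Finset.prod_congr rfl (fun k _ => constantCoeff_U m)]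
    simp
  have hUne : U m ≠ 0 := by
    intro h
    have := congrArg (constantCoeff) h
    rw [constantCoeff_U, map_zero] at this
    exact one_ne_zero this
  have hQres : PowerSeries.rescale ω Q = Q := by
    have hcomp : ∀ k : ℕ, PowerSeries.rescale ω (PowerSeries.rescale (ω^k) (U m))
        = PowerSeries.rescale (ω^(k+1)) (U m) := by
      intro k
      rw [PowerSeries.rescale_rescale, ← pow_succ]
    have step1 : PowerSeries.rescale ω Q
        = ∏ k ∈ Finset.range p, PowerSeries.rescale (ω^(k+1)) (U m) := by
      rw [hQdef, map_prod]
      exact Finset.prod_congr rfl (fun k _ => hcomp k)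
    have hne0 : PowerSeries.rescale (ω^0) (U m) ≠ 0 := by
      rw [pow_zero, rescale_one]
      exact hUne
    refine mul_right_cancel₀ hne0 ?_
    rw [step1, ← Finset.prod_range_succ' (fun k => PowerSeries.rescale (ω^k) (U m)) p,
      Finset.prod_range_succ, hω.pow_eq_one, pow_zero, hQdef]
  have hQvan : ∀ j, ¬ p ∣ j → coeff j Q = 0 := by
    intro j hj
    have h1 := congrArg (coeff j) hQres
    rw [coeff_rescale] at h1
    have hne : ω ^ j ≠ 1 := fun h => hj ((hω.pow_eq_one_iff_dvd j).mp h)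
    have h2 : (ω ^ j - 1) * coeff j Q = 0 := by linear_combination h1
    rcases mul_eq_zero.mp h2 with h | h
    · exact absurd (sub_eq_zero.mp h) hne
    · exact h
  have hSpco : ∀ j, coeff j Sp
      = (if p ∣ j then (p:ℂ) else 0) * (if j = 0 then 0 else (((m+1) * j).choose j : ℂ)) := by
    intro j
    rw [hSpdef, map_sum]
    rw [Finset.sum_congr rfl (fun k _ => coeff_rescale (S m) (ω^k) j), ← Finset.sum_mul,
      Finset.sum_congr rfl (fun k _ => pow_right_comm ω k j),
      root_filter p ω hω j, coeff_S]
  have hQH : ∀ N, coeff (N * p) Q = coeff N H := by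
    intro N
    induction N using Nat.strong_induction_on with
    | _ N ih =>
      cases N with
      | zero =>
        rw [Nat.zero_mul, coeff_zero_eq_constantCoeff, hQ0, hH0]
      | succ N =>
        have e1 := ode_coeff Q Sp hQode ((N+1) * p)
        have e2 := ode_coeff H _ hH (N+1)
        have himg : (∑ k ∈ Finset.range ((N+1)*p+1),
              coeff k Q * coeff ((N+1) * p - k) Sp)
            = ∑ k ∈ Finset.range (N+2),
              coeff (k*p) Q * coeff ((N+1) * p - k*p) Sp := by
          rw [← Finset.sum_image
            (f := fun k => coeff k Q * coeff ((N+1) * p - k) Sp)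
            (g := (· * p))
            (fun a _ b _ hab => Nat.eq_of_mul_eq_mul_right hppos hab)]
          refine (Finset.sum_subset ?_ ?_).symm
          · intro x hx
            obtain ⟨k, hk, rfl⟩ := Finset.mem_image.mp hx
            have hk' : k ≤ N + 1 := by
              have := Finset.mem_range.mp hk; omega
            have : k * p ≤ (N+1) * p := Nat.mul_le_mul_right p hk'
            exact Finset.mem_range.mpr (by omega)
          · intro x hx hnx
            by_cases hdv : p ∣ x
            · exfalso
              obtain ⟨q, rfl⟩ := hdv
              have hx' : p * q ≤ (N+1) * p := by
                have := Finset.mem_range.mp hx; omega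
              have hq : q ≤ N + 1 := by
                by_contra hq
                push_neg at hq
                have : (N+2) * p ≤ p * q := by
                  calc (N+2) * p = p * (N+2) := Nat.mul_comm _ _
                    _ ≤ p * q := Nat.mul_le_mul_left p hq
                have h2 : (N+1) * p < (N+2) * p := by
                  have : 0 < p := hppos
                  nlinarith [this]
                omega
              exact hnx (Finset.mem_image.mpr ⟨q, Finset.mem_range.mpr (by omega),
                Nat.mul_comm q p ▸ (Nat.mul_comm p q ▸ rfl)⟩)
            · rw [hQvan _ hdv, zero_mul]
        have hpt : ∀ k ∈ Finset.range (N+2),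
            coeff (k*p) Q * coeff ((N+1) * p - k*p) Sp
              = (p:ℂ) * (coeff k H * coeff ((N+1) - k)
                  (PowerSeries.mk fun j =>
                    if j = 0 then 0 else (((m + 1) * j * p).choose (j * p) : ℂ))) := by
          intro k hk
          have hk' : k ≤ N + 1 := by have := Finset.mem_range.mp hk; omega
          have hsub : (N+1) * p - k * p = ((N+1) - k) * p := (Nat.sub_mul (N+1) k p).symm
          rw [hsub, hSpco, coeff_mk]
          by_cases hkN : k = N + 1
          · subst hkN
            rw [Nat.sub_self]
            norm_num
          · have hlt : k < N + 1 := by omega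
            rw [ih k (by omega)]
            have hj0 : ¬ ((N+1) - k) * p = 0 := Nat.mul_ne_zero (by omega) (by omega)
            rw [if_pos ⟨(N+1) - k, Nat.mul_comm _ _⟩, if_neg hj0, if_neg (show ¬ (N+1) - k = 0 by omega)]
            rw [show (m+1) * (((N+1) - k) * p) = (m+1) * ((N+1) - k) * p from (Nat.mul_assoc _ _ _).symm]
            ring
        rw [himg, Finset.sum_congr rfl hpt, ← Finset.mul_sum, ← e2] at e1
        have hN1 : (((N+1:ℕ)) : ℂ) ≠ 0 := Nat.cast_ne_zero.mpr (Nat.succ_ne_zero N)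
        have hcancel : (((N+1:ℕ)) : ℂ) * (p:ℂ) ≠ 0 := mul_ne_zero hN1 hp0
        refine mul_left_cancel₀ hcancel ?_
        push_cast at e1 ⊢
        linear_combination e1
  have hQeq : Q = PowerSeries.mk (fun k => if p ∣ k then coeff (k / p) H else 0) := by
    ext j
    rw [coeff_mk]
    by_cases hd : p ∣ j
    · rw [if_pos hd]
      obtain ⟨t, rfl⟩ := hd
      rw [Nat.mul_div_cancel_left t hppos, ← hQH t, Nat.mul_comm p t]
    · rw [if_neg hd]
      exact hQvan j hd
  -- final assembly
  have hfac : ∀ k ∈ Finset.range p,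
      (1 : ℂ⟦X⟧) - PowerSeries.rescale (ω^k) (PowerSeries.mk fun j =>
          (Nat.choose ((m+1) * j) j : ℂ) / ((((m+1 : ℕ) : ℂ) - 1) * (j:ℂ) + 1))
        = (C (-(ω^k)) * X) * PowerSeries.rescale (ω^k) (U m) := by
    intro k _
    rw [hFU, map_add, map_one, map_mul, rescale_X, map_neg]
    ring
  rw [Finset.prod_congr rfl hfac, Finset.prod_mul_distrib, Finset.prod_mul_distrib,
    Finset.prod_const, Finset.card_range, ← map_prod, prod_neg_pow p hp ω hω,
    map_neg, map_one, ← hQdef, hQeq]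
  ring
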